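/- Let X0, X1, X2 : ℝ³ → ℝ³ be C^∞ vector fields which form a basis of ℝ³ at every point and whose Lie brackets satisfy, for C^∞ real functions c¹₁₂, c²₁₂, c¹₀₁, c²₀₁, c¹₀₂, c²₀₂ on ℝ³: [X2,X1] = c¹₁₂·X1 + c²₁₂·X2 + X0, [X1,X0] = c¹₀₁·X1 + c²₀₁·X2, and [X2,X0] = c¹₀₂·X1 + c²₀₂·X2 (pointwise). Let ρ = 1/det(X1,X2,X0) and define, for a C^∞ vector field X, div_ρ(X) = trace(DX) + Dρ(X)/ρ (the divergence with respect to the measure with density ρ, i.e. the Popp volume of the frame). Then div_ρ(X1) = c²₁₂ and div_ρ(X2) = −c¹₁₂; consequently, for every C^∞ function δ : ℝ³ → ℝ, −div_ρ((X1δ)·X1 + (X2δ)·X2) = −X1(X1δ) − X2(X2δ) − c²₁₂·(X1δ) + c¹₁₂·(X2δ). -/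

import Mathlib

/-- The Lie bracket of two vector fields on a normed vector space:
`[X, Y](p) = DY(p)(X(p)) − DX(p)(Y(p))`. -/
noncomputable def vlie {E : Type*} [NormedAddCommGroup E] [NormedSpace ℝ E]
    (X Y : E → E) : E → E :=
  fun p => fderiv ℝ Y p (X p) - fderiv ℝ X p (Y p)

/-- The determinant of the 3×3 matrix whose columns are `X1 p`, `X2 p`, `X0 p`. -/
noncomputable def frameDet (X1 X2 X0 : (Fin 3 → ℝ) → Fin 3 → ℝ) (p : Fin 3 → ℝ) : ℝ :=
  Matrix.det (Matrix.of fun i j => ![X1 p, X2 p, X0 p] j i)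

/-- The divergence of `X` with respect to the measure with smooth density `ρ`
relative to Lebesgue measure: `div_ρ(X) = trace(DX) + Dρ(X)/ρ`. -/
noncomputable def divRho (ρ : (Fin 3 → ℝ) → ℝ) (X : (Fin 3 → ℝ) → Fin 3 → ℝ)
    (p : Fin 3 → ℝ) : ℝ :=
  LinearMap.trace ℝ (Fin 3 → ℝ) (fderiv ℝ X p : (Fin 3 → ℝ) →ₗ[ℝ] (Fin 3 → ℝ))
    + fderiv ℝ ρ p (X p) / ρ p

namespace PoppAux

abbrev E3 : Type := Fin 3 → ℝ

lemma one_le_inftop : (1 : WithTop ℕ∞) ≤ ((⊤ : ℕ∞) : WithTop ℕ∞) := by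
  exact_mod_cast (le_top : (1 : ℕ∞) ≤ ⊤)

lemma top_add_one_le : ((⊤ : ℕ∞) : WithTop ℕ∞) + 1 ≤ ((⊤ : ℕ∞) : WithTop ℕ∞) := by
  exact_mod_cast le_rfl

lemma det_bound (m : Fin 3 → E3) :
    ‖(Matrix.detRowAlternating (R := ℝ) (n := Fin 3)).toMultilinearMap m‖
      ≤ 6 * ∏ i, ‖m i‖ := by
  have h1 : (Matrix.detRowAlternating (R := ℝ) (n := Fin 3)).toMultilinearMap m
      = Matrix.det (Matrix.of m) := rfl
  rw [h1, Matrix.det_apply]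
  calc ‖∑ σ : Equiv.Perm (Fin 3), Equiv.Perm.sign σ • ∏ i, Matrix.of m (σ i) i‖
      ≤ ∑ σ : Equiv.Perm (Fin 3), ‖Equiv.Perm.sign σ • ∏ i, Matrix.of m (σ i) i‖ :=
        norm_sum_le _ _
    _ ≤ ∑ _σ : Equiv.Perm (Fin 3), ∏ i, ‖m i‖ := by
        apply Finset.sum_le_sum
        intro σ _
        have hs : ‖Equiv.Perm.sign σ • ∏ i, Matrix.of m (σ i) i‖
            = ‖∏ i, m (σ i) i‖ := by
          rcases Int.units_eq_one_or (Equiv.Perm.sign σ) with h | h <;>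
            simp [h, Units.smul_def]
        rw [hs]
        have : ‖∏ i, m (σ i) i‖ ≤ ∏ i, ‖m (σ i)‖ := by
          rw [Real.norm_eq_abs, Finset.abs_prod]
          apply Finset.prod_le_prod (fun i _ => abs_nonneg _)
          intro i _
          exact norm_le_pi_norm (m (σ i)) i
        refine this.trans (le_of_eq ?_)
        exact Equiv.prod_comp σ fun i => ‖m i‖
    _ = 6 * ∏ i, ‖m i‖ := by
        rw [Finset.sum_const, Finset.card_univ, Fintype.card_perm]
        simp [Nat.factorial, nsmul_eq_mul]

/-- The determinant of the rows, as a continuous multilinear map on `(Fin 3 → ℝ)³`. -/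
noncomputable def detCM : ContinuousMultilinearMap ℝ (fun _ : Fin 3 => E3) ℝ :=
  MultilinearMap.mkContinuous
    (Matrix.detRowAlternating (R := ℝ) (n := Fin 3)).toMultilinearMap 6 det_bound

lemma detCM_apply (m : Fin 3 → E3) : detCM m = Matrix.det (Matrix.of m) := rfl

lemma detCM_eq_zero_of_eq (v : Fin 3 → E3) {i j : Fin 3} (h : v i = v j) (hij : i ≠ j) :
    detCM v = 0 :=
  (Matrix.detRowAlternating (R := ℝ) (n := Fin 3)).map_eq_zero_of_eq v h hij

lemma trace_eq_sum (A : E3 →ₗ[ℝ] E3) :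
    LinearMap.trace ℝ E3 A = ∑ i, A (Pi.basisFun ℝ (Fin 3) i) i := by
  rw [LinearMap.trace_eq_matrix_trace ℝ (Pi.basisFun ℝ (Fin 3)), Matrix.trace]
  simp [LinearMap.toMatrix_apply, Matrix.diag]

lemma trace_smulRight (L : E3 →L[ℝ] ℝ) (w : E3) :
    LinearMap.trace ℝ E3 ((L.smulRight w : E3 →L[ℝ] E3) : E3 →ₗ[ℝ] E3) = L w := by
  rw [trace_eq_sum]
  have hw : ∑ i, w i • Pi.basisFun ℝ (Fin 3) i = w := by
    simpa using (Pi.basisFun ℝ (Fin 3)).sum_repr w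
  conv_rhs => rw [← hw]
  rw [map_sum]
  refine Finset.sum_congr rfl fun i _ => ?_
  simp [mul_comm]

lemma trace_mul_det (b : Fin 3 → E3) (hb : LinearIndependent ℝ b) (A : E3 →ₗ[ℝ] E3) :
    (LinearMap.trace ℝ E3 A) * detCM b = ∑ j, detCM (Function.update b j (A (b j))) := by
  have hcard : Fintype.card (Fin 3) = Module.finrank ℝ E3 := by
    simp [Module.finrank_fintype_fun_eq_card]
  set B := basisOfLinearIndependentOfCardEqFinrank hb hcard with hBdef
  have hB : ⇑B = b := coe_basisOfLinearIndependentOfCardEqFinrank hb hcard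
  have hupd : ∀ (j : Fin 3) (w : E3),
      detCM (Function.update b j w) = B.repr w j * detCM b := by
    intro j w
    have hw : w = ∑ k, B.repr w k • b k := by
      conv_lhs => rw [← B.sum_repr w]
      simp [hB]
    set L := detCM.toContinuousLinearMap b j with hL
    have hLapp : ∀ x, L x = detCM (Function.update b j x) := fun x => rfl
    rw [← hLapp, hw, map_sum]
    rw [Finset.sum_eq_single j]
    · rw [map_smul, hLapp, Function.update_eq_self, smul_eq_mul, ← hw]
    · intro k _ hkj
      rw [map_smul, hLapp, smul_eq_mul]
      have : Function.update b j (b k) k = Function.update b j (b k) j := by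
        rw [Function.update_of_ne hkj, Function.update_self]
      rw [detCM_eq_zero_of_eq _ this hkj, mul_zero]
    · intro h
      exact absurd (Finset.mem_univ j) h
  have htr : LinearMap.trace ℝ E3 A = ∑ j, B.repr (A (b j)) j := by
    rw [LinearMap.trace_eq_matrix_trace ℝ B, Matrix.trace]
    simp [LinearMap.toMatrix_apply, Matrix.diag, hB]
  rw [htr, Finset.sum_mul]
  refine Finset.sum_congr rfl fun j _ => ?_
  rw [hupd j (A (b j))]

lemma detCM_ne_zero (b : Fin 3 → E3) (hb : LinearIndependent ℝ b) : detCM b ≠ 0 := by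
  have hcard : Fintype.card (Fin 3) = Module.finrank ℝ E3 := by
    simp [Module.finrank_fintype_fun_eq_card]
  set B := basisOfLinearIndependentOfCardEqFinrank hb hcard with hBdef
  have hB : ⇑B = b := coe_basisOfLinearIndependentOfCardEqFinrank hb hcard
  have h1 : IsUnit ((Pi.basisFun ℝ (Fin 3)).det b) := by
    rw [← hB]
    exact (Pi.basisFun ℝ (Fin 3)).isUnit_det B
  rw [Pi.basisFun_det] at h1
  exact isUnit_iff_ne_zero.mp h1

lemma frame_apply (X1 X2 X0 : E3 → E3) (p : E3) :
    (fun j => ![X1, X2, X0] j p) = ![X1 p, X2 p, X0 p] := by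
  funext j
  fin_cases j <;> rfl

lemma frameDet_eq (X1 X2 X0 : E3 → E3) (p : E3) :
    frameDet X1 X2 X0 p = detCM ![X1 p, X2 p, X0 p] := by
  rw [detCM_apply, frameDet, ← Matrix.det_transpose (Matrix.of ![X1 p, X2 p, X0 p])]
  rfl

lemma upd0 (a b c x : E3) : Function.update ![a, b, c] 0 x = ![x, b, c] := by
  funext j; fin_cases j <;> simp [Function.update]
lemma upd1 (a b c x : E3) : Function.update ![a, b, c] 1 x = ![a, x, c] := by
  funext j; fin_cases j <;> simp [Function.update]
lemma upd2 (a b c x : E3) : Function.update ![a, b, c] 2 x = ![a, b, x] := by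
  funext j; fin_cases j <;> simp [Function.update]

lemma detCM_rep01 (a c : E3) : detCM ![a, a, c] = 0 :=
  detCM_eq_zero_of_eq _ (i := 0) (j := 1) rfl (by decide)
lemma detCM_rep02 (a b : E3) : detCM ![a, b, a] = 0 :=
  detCM_eq_zero_of_eq _ (i := 0) (j := 2) rfl (by decide)
lemma detCM_rep12 (a b : E3) : detCM ![a, b, b] = 0 :=
  detCM_eq_zero_of_eq _ (i := 1) (j := 2) rfl (by decide)

end PoppAux

open PoppAux in
/-- Lemma 3.11 of the paper: for a contact-type frame `X1, X2, X0`
with structure functions `cᵏᵢⱼ`, the divergences with respect to the Popp volume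
(density `ρ = 1/det(X1,X2,X0)`) are `div_ρ(X1) = c²₁₂`, `div_ρ(X2) = −c¹₁₂`; hence
the mean-curvature expression
`−div_ρ((X1δ)X1 + (X2δ)X2) = −X1X1δ − X2X2δ − c²₁₂(X1δ) + c¹₁₂(X2δ)`. -/
theorem divergence_of_frame_popp
    (X0 X1 X2 : (Fin 3 → ℝ) → Fin 3 → ℝ)
    (hX0 : ContDiff ℝ (⊤ : ℕ∞) X0) (hX1 : ContDiff ℝ (⊤ : ℕ∞) X1)
    (hX2 : ContDiff ℝ (⊤ : ℕ∞) X2)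
    (c112 c212 c101 c201 c102 c202 : (Fin 3 → ℝ) → ℝ)
    (hc112 : ContDiff ℝ (⊤ : ℕ∞) c112) (hc212 : ContDiff ℝ (⊤ : ℕ∞) c212)
    (hc101 : ContDiff ℝ (⊤ : ℕ∞) c101) (hc201 : ContDiff ℝ (⊤ : ℕ∞) c201)
    (hc102 : ContDiff ℝ (⊤ : ℕ∞) c102) (hc202 : ContDiff ℝ (⊤ : ℕ∞) c202)
    (hbasis : ∀ p, LinearIndependent ℝ ![X1 p, X2 p, X0 p])
    (hbr21 : ∀ p, vlie X2 X1 p = c112 p • X1 p + c212 p • X2 p + X0 p)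
    (hbr10 : ∀ p, vlie X1 X0 p = c101 p • X1 p + c201 p • X2 p)
    (hbr20 : ∀ p, vlie X2 X0 p = c102 p • X1 p + c202 p • X2 p)
    (ρ : (Fin 3 → ℝ) → ℝ) (hρ : ρ = fun p => 1 / frameDet X1 X2 X0 p) :
    (∀ p, divRho ρ X1 p = c212 p) ∧
    (∀ p, divRho ρ X2 p = -c112 p) ∧
    (∀ δ : (Fin 3 → ℝ) → ℝ, ContDiff ℝ (⊤ : ℕ∞) δ → ∀ p,
      -divRho ρ (fun q => (fderiv ℝ δ q (X1 q)) • X1 q + (fderiv ℝ δ q (X2 q)) • X2 q) p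
        = -(fderiv ℝ (fun q => fderiv ℝ δ q (X1 q)) p (X1 p))
          - fderiv ℝ (fun q => fderiv ℝ δ q (X2 q)) p (X2 p)
          - c212 p * fderiv ℝ δ p (X1 p) + c112 p * fderiv ℝ δ p (X2 p)) := by
  classical
  set D : E3 → ℝ := frameDet X1 X2 X0 with hD
  set g : Fin 3 → (E3 → E3) := ![X1, X2, X0] with hg
  have hgd : ∀ i, Differentiable ℝ (g i) := by
    intro i
    fin_cases i
    · exact hX1.differentiable (by simp)
    · exact hX2.differentiable (by simp)
    · exact hX0.differentiable (by simp)
  have hX1d : Differentiable ℝ X1 := hX1.differentiable (by simp)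
  have hX2d : Differentiable ℝ X2 := hX2.differentiable (by simp)
  have hX0d : Differentiable ℝ X0 := hX0.differentiable (by simp)
  -- the derivative of D
  set D' : E3 → (E3 →L[ℝ] ℝ) := fun p =>
    ∑ i, (detCM.toContinuousLinearMap ![X1 p, X2 p, X0 p] i).comp (fderiv ℝ (g i) p)
    with hD'
  have hDderiv : ∀ p, HasFDerivAt D (D' p) p := by
    intro p
    have h : ∀ i, HasFDerivAt (g i) (fderiv ℝ (g i) p) p :=
      fun i => (hgd i p).hasFDerivAt
    have h2 := HasFDerivAt.multilinear_comp detCM h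
    have hfun : (fun x => detCM fun i => g i x) = D := by
      funext x
      rw [frame_apply X1 X2 X0 x, hD, frameDet_eq]
    have harg : (fun j => g j p) = ![X1 p, X2 p, X0 p] := frame_apply X1 X2 X0 p
    rw [hfun, harg] at h2
    exact h2
  have hD'app : ∀ p v, D' p v = ∑ i, detCM (Function.update ![X1 p, X2 p, X0 p] i
      (fderiv ℝ (g i) p v)) := by
    intro p v
    rw [hD']
    simp [ContinuousLinearMap.sum_apply, ContinuousMultilinearMap.toContinuousLinearMap]
  have hDne : ∀ p, D p ≠ 0 := by
    intro p
    rw [hD, frameDet_eq]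
    exact detCM_ne_zero _ (hbasis p)
  have hρderiv : ∀ p, HasFDerivAt ρ ((-(D p ^ 2)⁻¹) • D' p) p := by
    intro p
    have h1 : HasDerivAt (fun x : ℝ => x⁻¹) (-(D p ^ 2)⁻¹) (D p) := hasDerivAt_inv (hDne p)
    have h2 := h1.comp_hasFDerivAt p (hDderiv p)
    have : ρ = (fun x : ℝ => x⁻¹) ∘ D := by
      funext q; rw [hρ]; simp [one_div, hD]
    rw [this]
    exact h2
  have hρterm : ∀ p v, fderiv ℝ ρ p v / ρ p = -(D' p v) / D p := by
    intro p v
    rw [(hρderiv p).fderiv]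
    have hρp : ρ p = (D p)⁻¹ := by rw [hρ]; simp [one_div, hD]
    rw [hρp]
    have h2 : (D p ^ 2) ≠ 0 := pow_ne_zero 2 (hDne p)
    have hne := hDne p
    simp only [ContinuousLinearMap.coe_smul', Pi.smul_apply, smul_eq_mul]
    rw [pow_two, mul_inv]
    field_simp
    try ring
  -- trace times D
  have htrace : ∀ (X : E3 → E3), Differentiable ℝ X → ∀ p,
      LinearMap.trace ℝ E3 (fderiv ℝ X p : E3 →ₗ[ℝ] E3) * D p
        = ∑ j, detCM (Function.update ![X1 p, X2 p, X0 p] j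
            (fderiv ℝ X p (![X1 p, X2 p, X0 p] j))) := by
    intro X hXd p
    rw [hD, frameDet_eq]
    exact trace_mul_det _ (hbasis p) _
  -- key divergence formula
  have hkey : ∀ (X : E3 → E3), Differentiable ℝ X → ∀ p,
      divRho ρ X p * D p =
        (∑ j, detCM (Function.update ![X1 p, X2 p, X0 p] j
            (fderiv ℝ X p (![X1 p, X2 p, X0 p] j))))
        - ∑ i, detCM (Function.update ![X1 p, X2 p, X0 p] i
            (fderiv ℝ (g i) p (X p))) := by
    intro X hXd p
    rw [divRho, add_mul, htrace X hXd p, hρterm p (X p), hD'app]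
    have hne := hDne p
    field_simp
    try ring
  -- the bracket rewrites
  have hbrA : ∀ p, fderiv ℝ X1 p (X2 p) = fderiv ℝ X2 p (X1 p) + vlie X2 X1 p := by
    intro p; rw [vlie]; abel
  have hbrB : ∀ p, fderiv ℝ X0 p (X1 p) = fderiv ℝ X1 p (X0 p) + vlie X1 X0 p := by
    intro p; rw [vlie]; abel
  have hbrC : ∀ p, fderiv ℝ X0 p (X2 p) = fderiv ℝ X2 p (X0 p) + vlie X2 X0 p := by
    intro p; rw [vlie]; abel
  -- expansion of detCM in a slot against the bracket expressions
  have hexp1 : ∀ p, detCM (Function.update ![X1 p, X2 p, X0 p] 1 (vlie X2 X1 p))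
      = c212 p * D p := by
    intro p
    rw [hbr21 p]
    rw [ContinuousMultilinearMap.map_update_add, ContinuousMultilinearMap.map_update_add,
      ContinuousMultilinearMap.map_update_smul, ContinuousMultilinearMap.map_update_smul]
    rw [upd1, upd1, upd1]
    rw [detCM_rep01, detCM_rep12]
    have : detCM ![X1 p, X2 p, X0 p] = D p := (frameDet_eq X1 X2 X0 p).symm
    rw [this]
    simp
  have hexp0 : ∀ p, detCM (Function.update ![X1 p, X2 p, X0 p] 0 (vlie X2 X1 p))
      = c112 p * D p := by
    intro p
    rw [hbr21 p]
    rw [ContinuousMultilinearMap.map_update_add, ContinuousMultilinearMap.map_update_add,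
      ContinuousMultilinearMap.map_update_smul, ContinuousMultilinearMap.map_update_smul]
    rw [upd0, upd0, upd0]
    rw [detCM_rep01, detCM_rep02]
    have : detCM ![X1 p, X2 p, X0 p] = D p := (frameDet_eq X1 X2 X0 p).symm
    rw [this]
    simp
  have hexp2B : ∀ p, detCM (Function.update ![X1 p, X2 p, X0 p] 2 (vlie X1 X0 p)) = 0 := by
    intro p
    rw [hbr10 p]
    rw [ContinuousMultilinearMap.map_update_add, ContinuousMultilinearMap.map_update_smul,
      ContinuousMultilinearMap.map_update_smul]
    rw [upd2, upd2, detCM_rep02, detCM_rep12]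
    simp
  have hexp2C : ∀ p, detCM (Function.update ![X1 p, X2 p, X0 p] 2 (vlie X2 X0 p)) = 0 := by
    intro p
    rw [hbr20 p]
    rw [ContinuousMultilinearMap.map_update_add, ContinuousMultilinearMap.map_update_smul,
      ContinuousMultilinearMap.map_update_smul]
    rw [upd2, upd2, detCM_rep02, detCM_rep12]
    simp
  have hg0 : g 0 = X1 := rfl
  have hg1 : g 1 = X2 := rfl
  have hg2 : g 2 = X0 := rfl
  have hb0 : ∀ p, (![X1 p, X2 p, X0 p] : Fin 3 → E3) 0 = X1 p := fun p => rfl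
  have hb1 : ∀ p, (![X1 p, X2 p, X0 p] : Fin 3 → E3) 1 = X2 p := fun p => rfl
  have hb2 : ∀ p, (![X1 p, X2 p, X0 p] : Fin 3 → E3) 2 = X0 p := fun p => rfl
  -- part 1
  have part1 : ∀ p, divRho ρ X1 p = c212 p := by
    intro p
    have h := hkey X1 hX1d p
    rw [Fin.sum_univ_three, Fin.sum_univ_three] at h
    rw [hg0, hg1, hg2, hb0, hb1, hb2] at h
    rw [hbrA p, hbrB p] at h
    rw [ContinuousMultilinearMap.map_update_add, ContinuousMultilinearMap.map_update_add,
      hexp1 p, hexp2B p] at h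
    have h2 : divRho ρ X1 p * D p = c212 p * D p := by rw [h]; ring
    exact mul_right_cancel₀ (hDne p) h2
  have part2 : ∀ p, divRho ρ X2 p = -c112 p := by
    intro p
    have h := hkey X2 hX2d p
    rw [Fin.sum_univ_three, Fin.sum_univ_three] at h
    rw [hg0, hg1, hg2, hb0, hb1, hb2] at h
    rw [hbrA p, hbrC p] at h
    rw [ContinuousMultilinearMap.map_update_add, ContinuousMultilinearMap.map_update_add,
      hexp0 p, hexp2C p] at h
    have h2 : divRho ρ X2 p * D p = -c112 p * D p := by rw [h]; ring
    exact mul_right_cancel₀ (hDne p) h2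
  refine ⟨part1, part2, ?_⟩
  -- part 3
  intro δ hδ p
  set f1 : E3 → ℝ := fun q => fderiv ℝ δ q (X1 q) with hf1
  set f2 : E3 → ℝ := fun q => fderiv ℝ δ q (X2 q) with hf2
  have hδ' : ContDiff ℝ (⊤ : ℕ∞) (fderiv ℝ δ) := by
    exact hδ.fderiv_right top_add_one_le
  have hf1c : ContDiff ℝ (⊤ : ℕ∞) f1 := hδ'.clm_apply hX1
  have hf2c : ContDiff ℝ (⊤ : ℕ∞) f2 := hδ'.clm_apply hX2
  have hf1d : Differentiable ℝ f1 := hf1c.differentiable (by simp)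
  have hf2d : Differentiable ℝ f2 := hf2c.differentiable (by simp)
  -- the derivative of the combined field
  have hcomb : fderiv ℝ (fun q => f1 q • X1 q + f2 q • X2 q) p
      = (f1 p • fderiv ℝ X1 p + (fderiv ℝ f1 p).smulRight (X1 p))
        + (f2 p • fderiv ℝ X2 p + (fderiv ℝ f2 p).smulRight (X2 p)) := by
    have d1 : DifferentiableAt ℝ (fun q => f1 q • X1 q) p := (hf1d p).smul (hX1d p)
    have d2 : DifferentiableAt ℝ (fun q => f2 q • X2 q) p := (hf2d p).smul (hX2d p)
    rw [fderiv_fun_add d1 d2, fderiv_fun_smul (hf1d p) (hX1d p), fderiv_fun_smul (hf2d p) (hX2d p)]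
  -- trace of the combined derivative
  have htr : LinearMap.trace ℝ E3 (fderiv ℝ (fun q => f1 q • X1 q + f2 q • X2 q) p :
        E3 →ₗ[ℝ] E3)
      = f1 p * LinearMap.trace ℝ E3 (fderiv ℝ X1 p : E3 →ₗ[ℝ] E3)
        + fderiv ℝ f1 p (X1 p)
        + (f2 p * LinearMap.trace ℝ E3 (fderiv ℝ X2 p : E3 →ₗ[ℝ] E3)
        + fderiv ℝ f2 p (X2 p)) := by
    rw [hcomb]
    push_cast [ContinuousLinearMap.coe_add, ContinuousLinearMap.coe_smul]
    rw [map_add, map_add, map_add, map_smul, map_smul]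
    rw [trace_smulRight, trace_smulRight]
    simp [smul_eq_mul]
    try ring
  -- the ρ-term
  have hρcomb : fderiv ℝ ρ p ((fun q => f1 q • X1 q + f2 q • X2 q) p) / ρ p
      = f1 p * (fderiv ℝ ρ p (X1 p) / ρ p) + f2 p * (fderiv ℝ ρ p (X2 p) / ρ p) := by
    simp only
    rw [map_add, (fderiv ℝ ρ p).map_smul, (fderiv ℝ ρ p).map_smul]
    rw [add_div]
    rw [smul_eq_mul, smul_eq_mul, mul_div_assoc, mul_div_assoc]
  -- combine
  have hdiv : divRho ρ (fun q => f1 q • X1 q + f2 q • X2 q) p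
      = f1 p * divRho ρ X1 p + f2 p * divRho ρ X2 p
        + fderiv ℝ f1 p (X1 p) + fderiv ℝ f2 p (X2 p) := by
    rw [divRho, htr, hρcomb, divRho, divRho]
    ring
  have e1 := part1 p
  have e2 := part2 p
  calc -divRho ρ (fun q => f1 q • X1 q + f2 q • X2 q) p
      = -(f1 p * c212 p + f2 p * (-c112 p)
          + fderiv ℝ f1 p (X1 p) + fderiv ℝ f2 p (X2 p)) := by rw [hdiv, e1, e2]
    _ = -(fderiv ℝ f1 p (X1 p)) - fderiv ℝ f2 p (X2 p)
          - c212 p * f1 p + c112 p * f2 p := by ring
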